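/- Let I be a finite set of applicants, V : I → ℝ, P : I → ℝ with 0 < P i ≤ 1 for every i, and M ≥ 0 a hiring cap. If a hiring rule h : I → [0,1] is optimal — i.e., h is feasible (∑_i P i · h i ≤ M) and ∑_i V i · P i · h i ≥ ∑_i V i · P i · g i for every feasible hiring rule g : I → [0,1] — then h is monotone in values: for all applicants i, i', if V i > V i' and h i' > 0, then h i = 1. -/

import Mathlib

/-- Monotonicity consequence of the exchange argument in the paper's
Proposition 1: an optimal hiring rule `h` (feasible under the cap `M`, and
maximizing expected utility among feasible rules) satisfies: whenever
`V i > V i'` and `h i' > 0`, we have `h i = 1`. -/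
theorem optimal_rule_monotone {I : Type*} [Fintype I]
    (V P : I → ℝ) (hP : ∀ i, 0 < P i ∧ P i ≤ 1)
    (M : ℝ) (hM : 0 ≤ M)
    (h : I → ℝ) (hh : ∀ i, 0 ≤ h i ∧ h i ≤ 1)
    (hfeas : ∑ i, P i * h i ≤ M)
    (hopt : ∀ g : I → ℝ, (∀ i, 0 ≤ g i ∧ g i ≤ 1) →
      (∑ i, P i * g i ≤ M) →
      ∑ i, V i * P i * g i ≤ ∑ i, V i * P i * h i) :
    ∀ i i', V i > V i' → h i' > 0 → h i = 1 := by
  intro i i' hVV hi'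
  classical
  by_contra hne
  have hi1 : h i < 1 := lt_of_le_of_ne (hh i).2 hne
  have hii' : i ≠ i' := by rintro rfl; exact lt_irrefl _ hVV
  have hPi := (hP i).1
  have hPi' := (hP i').1
  set ε : ℝ := min (P i * (1 - h i)) (P i' * h i') with hε
  have hε1 : ε ≤ P i * (1 - h i) := min_le_left _ _
  have hε2 : ε ≤ P i' * h i' := min_le_right _ _
  have hεpos : 0 < ε := lt_min (mul_pos hPi (by linarith)) (mul_pos hPi' hi')
  set g : I → ℝ := fun j =>
    h j + (if j = i then ε / P i else 0) - (if j = i' then ε / P i' else 0) with hg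
  have hgbound : ∀ j, 0 ≤ g j ∧ g j ≤ 1 := by
    intro j
    by_cases hji : j = i
    · subst hji
      simp only [hg, eq_self_iff_true, if_true, if_neg hii']
      have : ε / P j ≤ 1 - h j := (div_le_iff₀ hPi).mpr (by linarith [mul_comm (1 - h j) (P j)])
      constructor
      · have := (hh j).1
        have : 0 ≤ ε / P j := le_of_lt (div_pos hεpos hPi)
        linarith [(hh j).1]
      · linarith
    · by_cases hji' : j = i'
      · subst hji'
        simp only [hg, if_neg hji, eq_self_iff_true, if_true]
        have : ε / P j ≤ h j := (div_le_iff₀ hPi').mpr (by linarith [mul_comm (h j) (P j)])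
        constructor
        · linarith
        · have : 0 ≤ ε / P j := le_of_lt (div_pos hεpos hPi')
          linarith [(hh j).2]
      · simp only [hg, if_neg hji, if_neg hji']
        simpa using hh j
  have hP1 : ∀ j, P j * g j = P j * h j +
      ((if j = i then ε else 0) - (if j = i' then ε else 0)) := by
    intro j
    by_cases hji : j = i
    · subst hji
      simp only [hg, if_pos rfl, if_neg hii', if_true]
      field_simp
      try ring
    · by_cases hji' : j = i'
      · subst hji'
        simp only [hg, if_neg hji, if_pos rfl, if_true]
        field_simp
        try ring
      · simp [hg, hji, hji']
  have hV1 : ∀ j, V j * P j * g j = V j * P j * h j +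
      ((if j = i then V i * ε else 0) - (if j = i' then V i' * ε else 0)) := by
    intro j
    by_cases hji : j = i
    · subst hji
      simp only [hg, if_pos rfl, if_neg hii', if_true]
      field_simp
      try ring
    · by_cases hji' : j = i'
      · subst hji'
        simp only [hg, if_neg hji, if_pos rfl, if_true]
        field_simp
        try ring
      · simp [hg, hji, hji']
  have hsumP : ∑ j, P j * g j = ∑ j, P j * h j := by
    rw [Finset.sum_congr rfl fun j _ => hP1 j, Finset.sum_add_distrib,
      Finset.sum_sub_distrib]
    simp [Finset.sum_ite_eq']
  have hsumV : ∑ j, V j * P j * g j = ∑ j, V j * P j * h j + (V i * ε - V i' * ε) := by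
    rw [Finset.sum_congr rfl fun j _ => hV1 j, Finset.sum_add_distrib,
      Finset.sum_sub_distrib]
    simp [Finset.sum_ite_eq']
  have hkey := hopt g hgbound (by rw [hsumP]; exact hfeas)
  rw [hsumV] at hkey
  nlinarith [hεpos, hVV]
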